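/- arXiv:2107.05152 — 16 statements merged into one kernel-verified Lean document; each statement's English description precedes it below -/
import Mathlib

section
/- Let R be an arithmetical ring, i.e. a commutative ring whose lattice of ideals is distributive. Then for all a, b ∈ R there exist α, r, s ∈ R such that a·α = b·r and b·(α − 1) = a·s. -/
/-- Over an arithmetical ring (a commutative ring whose lattice of ideals is
distributive), for all `a b` there exist `α r s` with `a * α = b * r` and
`b * (α - 1) = a * s`. -/
theorem stmt0 (R : Type*) [CommRing R]
    (hdist : ∀ I J K : Ideal R, I ⊓ (J ⊔ K) = (I ⊓ J) ⊔ (I ⊓ K)) :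
    ∀ a b : R, ∃ α r s : R, a * α = b * r ∧ b * (α - 1) = a * s := by
  intro a b
  have hb : b ∈ (Ideal.span {b} ⊓ (Ideal.span {a} ⊔ Ideal.span {b - a}) : Ideal R) := by
    refine ⟨Ideal.mem_span_singleton_self b, ?_⟩
    have h : a + (b - a) ∈ Ideal.span {a} ⊔ Ideal.span {b - a} :=
      Ideal.add_mem _ (Ideal.mem_sup_left (Ideal.mem_span_singleton_self a))
        (Ideal.mem_sup_right (Ideal.mem_span_singleton_self (b - a)))
    simpa using h
  rw [hdist] at hb
  obtain ⟨x, hx, y, hy, hxy⟩ := Submodule.mem_sup.mp hb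
  obtain ⟨hxb, hxa⟩ := hx
  obtain ⟨hyb, hyk⟩ := hy
  obtain ⟨v, hv⟩ := Ideal.mem_span_singleton.mp hxa
  obtain ⟨w, hw⟩ := Ideal.mem_span_singleton.mp hyb
  obtain ⟨t, ht⟩ := Ideal.mem_span_singleton.mp hyk
  exact ⟨t, t - w, t - v, by linear_combination ht - hw, by linear_combination -ht + hxy - hv⟩
end

section
/- Let V be a valuation domain, U a uniserial V-module, and N a submodule of U such that the quotient module U/N is finite and nontrivial. Then U is cyclic; in particular there is an ideal I of V such that U is isomorphic as a V-module to V/I. -/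
/-- If `U` is a uniserial module over a valuation domain `V` and `N` is a submodule
with `U/N` finite and nontrivial, then `U` is cyclic; in particular `U ≅ V/I`
for some ideal `I` of `V`. -/
theorem stmt1 (V : Type*) [CommRing V] [IsDomain V] [ValuationRing V]
    (U : Type*) [AddCommGroup U] [Module V U]
    (huni : ∀ N₁ N₂ : Submodule V U, N₁ ≤ N₂ ∨ N₂ ≤ N₁)
    (N : Submodule V U) (hfin : Finite (U ⧸ N)) (hnt : Nontrivial (U ⧸ N)) :
    (∃ u : U, Submodule.span V {u} = ⊤) ∧
      ∃ I : Ideal V, Nonempty (U ≃ₗ[V] V ⧸ I) := by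
  -- The set of proper submodules containing `N`
  set S : Set (Submodule V U) := {M | N ≤ M ∧ M ≠ ⊤} with hS
  have hNne : N ≠ ⊤ := by
    intro h
    rw [← Submodule.Quotient.subsingleton_iff] at h
    exact not_subsingleton _ h
  have hNS : N ∈ S := ⟨le_refl N, hNne⟩
  -- S is finite: it injects into the (finite) submodule lattice of U/N
  have hSfin : S.Finite := by
    have : Finite (Submodule V (U ⧸ N)) := by
      have : Finite (Set (U ⧸ N)) := by infer_instance
      exact Finite.of_injective (fun M => (M : Set (U ⧸ N)))
        (fun a b h => SetLike.coe_injective h)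
    apply Set.Finite.of_finite_image (f := fun M => M.map N.mkQ)
    · exact Set.toFinite _
    · intro a ha b hb hab
      have h1 : a = Submodule.comap N.mkQ (Submodule.map N.mkQ a) := by
        rw [Submodule.comap_map_mkQ, sup_eq_right.mpr ha.1]
      have h2 : b = Submodule.comap N.mkQ (Submodule.map N.mkQ b) := by
        rw [Submodule.comap_map_mkQ, sup_eq_right.mpr hb.1]
      rw [h1, h2]
      exact congrArg (Submodule.comap N.mkQ) hab
  obtain ⟨M, hMS, hMmax⟩ := hSfin.exists_maximalFor id S ⟨N, hNS⟩
  obtain ⟨u, hu⟩ : ∃ u : U, u ∉ M := by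
    by_contra h
    push_neg at h
    exact hMS.2 (Submodule.eq_top_iff'.mpr h)
  have hspan : Submodule.span V {u} = ⊤ := by
    have hle : M ≤ Submodule.span V {u} := by
      rcases huni (Submodule.span V {u}) M with h | h
      · exact absurd (h (Submodule.mem_span_singleton_self u)) hu
      · exact h
    by_contra htop
    have : Submodule.span V {u} ∈ S := ⟨le_trans hMS.1 hle, htop⟩
    have heq : M = Submodule.span V {u} := le_antisymm hle (hMmax this hle)
    exact hu (heq ▸ Submodule.mem_span_singleton_self u)
  refine ⟨⟨u, hspan⟩, ?_⟩
  set f := LinearMap.toSpanSingleton V U u with hf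
  have hsurj : Function.Surjective f := by
    rw [← LinearMap.range_eq_top, ← LinearMap.span_singleton_eq_range, hspan]
  exact ⟨LinearMap.ker f, ⟨(f.quotKerEquivOfSurjective hsurj).symm⟩⟩
end

section
/- Let V be a valuation domain, I a proper ideal of V and a ∈ V with a ≠ 0. Then (aI)^# = I^#; that is, for every r ∈ V, there exists x ∉ aI with r·x ∈ aI if and only if there exists x ∉ I with r·x ∈ I. Here aI denotes the product of the principal ideal (a) with I, i.e. the ideal {a·y : y ∈ I}. -/
/-- For a proper ideal `I` of a valuation domain `V` and a nonzero `a`,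
`(aI)^# = I^#`. -/
theorem stmt3 (V : Type*) [CommRing V] [IsDomain V] [ValuationRing V]
    (I : Ideal V) (hI : I ≠ ⊤) (a : V) (ha : a ≠ 0) :
    ∀ r : V,
      (∃ x : V, x ∉ Ideal.span {a} * I ∧ r * x ∈ Ideal.span {a} * I) ↔
      (∃ x : V, x ∉ I ∧ r * x ∈ I) := by
  intro r
  have key : ∀ z : V, a * z ∈ Ideal.span {a} * I ↔ z ∈ I := by
    intro z
    rw [Ideal.mem_span_singleton_mul]
    constructor
    · rintro ⟨w, hw, h⟩
      rwa [← mul_left_cancel₀ ha h]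
    · exact fun h => ⟨z, h, rfl⟩
  constructor
  · rintro ⟨x, hx, hrx⟩
    obtain ⟨c, hc | hc⟩ := ValuationRing.cond a x
    · -- a * c = x
      refine ⟨c, fun h => hx (hc ▸ (key c).2 h), ?_⟩
      apply (key (r * c)).1
      rw [mul_left_comm, hc]
      exact hrx
    · -- x * c = a : then r ∈ I
      have hx0 : x ≠ 0 := by rintro rfl; exact hx (zero_mem _)
      obtain ⟨w, hw, hweq⟩ := Ideal.mem_span_singleton_mul.1 hrx
      have hr : r = c * w := by
        apply mul_left_cancel₀ hx0
        rw [← mul_assoc, hc, mul_comm x r]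
        exact hweq.symm
      exact ⟨1, fun h => hI ((Ideal.eq_top_iff_one I).2 h),
        by rw [mul_one, hr]; exact I.mul_mem_left c hw⟩
  · rintro ⟨x, hx, hrx⟩
    exact ⟨a * x, fun h => hx ((key x).1 h),
      by rw [mul_left_comm]; exact (key (r * x)).2 hrx⟩
end

section
/- Let V be a valuation domain and I a proper ideal of V such that the quotient V/I is finite. Then I^# is the unique maximal ideal of V; that is, for every r ∈ V, there exists a ∉ I with r·a ∈ I if and only if r is not a unit of V. -/
/-- If `I` is a proper ideal of a valuation domain `V` with `V/I` finite, then
`I^#` is the unique maximal ideal of `V`, i.e. `r ∈ I^#` iff `r` is not a unit. -/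
theorem stmt4 (V : Type*) [CommRing V] [IsDomain V] [ValuationRing V]
    (I : Ideal V) (hI : I ≠ ⊤) (hfin : Finite (V ⧸ I)) :
    ∀ r : V, (∃ a : V, a ∉ I ∧ r * a ∈ I) ↔ ¬ IsUnit r := by
  intro r
  constructor
  · rintro ⟨a, ha, hra⟩ hr
    have h1 : (↑hr.unit⁻¹ : V) * (r * a) ∈ I := I.mul_mem_left _ hra
    rw [← mul_assoc, IsUnit.val_inv_mul, one_mul] at h1
    exact ha h1
  · intro hr
    -- pigeonhole on powers of r mod I
    obtain ⟨m, n, hmn, heq⟩ :=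
      Finite.exists_ne_map_eq_of_infinite (fun k : ℕ => Ideal.Quotient.mk I (r ^ k))
    wlog hlt : m < n generalizing m n
    · exact this n m hmn.symm heq.symm (by omega)
    have hsub : r ^ m - r ^ n ∈ I := Ideal.Quotient.eq.mp heq
    have hfac : r ^ m - r ^ n = r ^ m * (1 - r ^ (n - m)) := by
      rw [mul_sub, mul_one, ← pow_add, Nat.add_sub_cancel' hlt.le]
    have hpow_nonunit : ¬ IsUnit (r ^ (n - m)) := fun h => hr ((isUnit_pow_iff (by omega)).mp h)
    have hu : IsUnit (1 - r ^ (n - m)) :=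
      IsLocalRing.isUnit_one_sub_self_of_mem_nonunits _ hpow_nonunit
    have hrm : r ^ m ∈ I := by
      have h2 : (r ^ m - r ^ n) * ↑hu.unit⁻¹ ∈ I := I.mul_mem_right _ hsub
      rwa [hfac, mul_assoc, IsUnit.mul_val_inv, mul_one] at h2
    classical
    -- take minimal k with r ^ k ∈ I
    have hex : ∃ k, r ^ k ∈ I := ⟨m, hrm⟩
    set k := Nat.find hex with hk
    have hkI : r ^ k ∈ I := Nat.find_spec hex
    have hk1 : 1 ≤ k := by
      rcases Nat.eq_zero_or_pos k with h0 | h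
      · exfalso
        apply hI
        rw [Ideal.eq_top_iff_one]
        simpa [h0] using hkI
      · exact h
    refine ⟨r ^ (k - 1), Nat.find_min hex (by omega), ?_⟩
    rw [← pow_succ']
    have : k - 1 + 1 = k := by omega
    rwa [this]
end

section
/- Let V be a commutative integral domain, b ∈ V nonzero, and I an ideal of V such that the quotient V/I is finite. Then the cardinality of I/bI equals the cardinality of V/bV, where bI denotes the submodule {b·y : y ∈ I} of I and bV the principal ideal generated by b. -/
open Cardinal


private lemma cancel_aux {n x y : Cardinal} (hn0 : n ≠ 0) (hn : n < ℵ₀)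
    (h : n * x = n * y) : x = y := by
  by_cases hx : x < ℵ₀ <;> by_cases hy : y < ℵ₀
  · obtain ⟨a, rfl⟩ := lt_aleph0.mp hn
    obtain ⟨b, rfl⟩ := lt_aleph0.mp hx
    obtain ⟨c, rfl⟩ := lt_aleph0.mp hy
    rw [← Nat.cast_mul, ← Nat.cast_mul, Nat.cast_inj] at h
    have ha : a ≠ 0 := by rintro rfl; simp at hn0
    exact_mod_cast Nat.eq_of_mul_eq_mul_left (Nat.pos_of_ne_zero ha) h
  · exact absurd (h ▸ mul_lt_aleph0 hn hx) fun hc => hy ((le_mul_left hn0).trans_lt hc)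
  · exact absurd (h ▸ (mul_lt_aleph0 hn hy : n * y < ℵ₀)) fun hc => hx ((le_mul_left hn0).trans_lt hc)
  · push_neg at hx hy
    rw [mul_eq_right hx (hn.le.trans hx) hn0, mul_eq_right hy (hn.le.trans hy) hn0] at h
    exact h

private lemma mk_eq_mk_quotient_mul {R M : Type*} [Ring R] [AddCommGroup M] [Module R M]
    (N : Submodule R M) : Cardinal.mk M = Cardinal.mk (M ⧸ N) * Cardinal.mk N := by
  have e : M ≃ (M ⧸ N.toAddSubgroup) × N.toAddSubgroup :=
    AddSubgroup.addGroupEquivQuotientProdAddSubgroup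
  have : (M ⧸ N) = (M ⧸ N.toAddSubgroup) := rfl
  rw [Cardinal.mk_congr e, Cardinal.mk_prod, this]
  simp [Cardinal.lift_id]

/-- If `V` is an integral domain, `b ≠ 0` and `I` is an ideal with `V/I` finite,
then `|I/bI| = |V/bV|`. -/
theorem stmt5 (V : Type*) [CommRing V] [IsDomain V] (b : V) (hb : b ≠ 0)
    (I : Ideal V) (hfin : Finite (V ⧸ I)) :
    Cardinal.mk (↥I ⧸ Submodule.comap I.subtype (Ideal.span {b} * I)) =
      Cardinal.mk (V ⧸ Ideal.span {b}) := by
  set J : Ideal V := Ideal.span {b} with hJ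
  set T : Ideal V := J * I with hT
  have hTI : T ≤ I := Ideal.mul_le_inf.trans inf_le_right
  have hTJ : T ≤ J := Ideal.mul_le_inf.trans inf_le_left
  -- first iso: I ⧸ comap I.subtype T ≃ Submodule.map T.mkQ I
  have e1 : (↥I ⧸ Submodule.comap I.subtype T) ≃ₗ[V] ↥(Submodule.map T.mkQ I) := by
    have hker : LinearMap.ker (T.mkQ.comp I.subtype) = Submodule.comap I.subtype T := by
      rw [LinearMap.ker_comp, Submodule.ker_mkQ]
    have hrange : LinearMap.range (T.mkQ.comp I.subtype) = Submodule.map T.mkQ I := by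
      rw [LinearMap.range_comp, Submodule.range_subtype]
    exact (Submodule.quotEquivOfEq _ _ hker.symm).trans
      (((T.mkQ.comp I.subtype).quotKerEquivRange).trans (LinearEquiv.ofEq _ _ hrange))
  -- first iso: V ⧸ I ≃ Submodule.map T.mkQ J
  have e2 : (V ⧸ I) ≃ₗ[V] ↥(Submodule.map T.mkQ J) := by
    set g : V →ₗ[V] V ⧸ T := T.mkQ.comp (LinearMap.toSpanSingleton V V b) with hg
    have hker : LinearMap.ker g = I := by
      ext x
      simp only [hg, LinearMap.mem_ker, LinearMap.comp_apply,
        LinearMap.toSpanSingleton_apply, Submodule.mkQ_apply, Submodule.Quotient.mk_eq_zero,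
        smul_eq_mul, hT, hJ]
      rw [Ideal.mem_span_singleton_mul]
      constructor
      · rintro ⟨z, hz, hzx⟩
        have : x = z := mul_left_cancel₀ hb (by rw [hzx, mul_comm])
        exact this ▸ hz
      · intro hx; exact ⟨x, hx, by ring⟩
    have hrange : LinearMap.range g = Submodule.map T.mkQ J := by
      rw [hg, LinearMap.range_comp, ← LinearMap.span_singleton_eq_range, hJ,
        Ideal.submodule_span_eq]
    exact (Submodule.quotEquivOfEq _ _ hker.symm).trans
      (g.quotKerEquivRange.trans (LinearEquiv.ofEq _ _ hrange))
  -- third iso: (V⧸T)⧸(S.map T.mkQ) ≃ V⧸S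
  have key1 : Cardinal.mk (V ⧸ T) =
      Cardinal.mk (V ⧸ I) * Cardinal.mk (↥I ⧸ Submodule.comap I.subtype T) := by
    rw [mk_eq_mk_quotient_mul (Submodule.map T.mkQ I), Cardinal.mk_congr e1.toEquiv,
      Cardinal.mk_congr (Submodule.quotientQuotientEquivQuotient T I hTI).toEquiv]
  have key2 : Cardinal.mk (V ⧸ T) =
      Cardinal.mk (V ⧸ J) * Cardinal.mk (V ⧸ I) := by
    rw [mk_eq_mk_quotient_mul (Submodule.map T.mkQ J), ← Cardinal.mk_congr e2.toEquiv,
      Cardinal.mk_congr (Submodule.quotientQuotientEquivQuotient T J hTJ).toEquiv]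
  have hn0 : Cardinal.mk (V ⧸ I) ≠ 0 := Cardinal.mk_ne_zero _
  have hnfin : Cardinal.mk (V ⧸ I) < Cardinal.aleph0 := Cardinal.lt_aleph0_of_finite _
  refine cancel_aux hn0 hnfin ?_
  rw [← key1, key2, mul_comm]
end

section
/- Let V be a valuation domain, I and J ideals of V, and a ∈ V with a ≠ 0. Then (I : a) ⊆ J if and only if I ⊆ aJ or J = V, where aJ denotes the product of the principal ideal (a) with J. -/
/-- For ideals `I, J` of a valuation domain `V` and `a ≠ 0`:
`(I : a) ⊆ J` iff `I ⊆ aJ` or `J = V`. -/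
theorem stmt6 (V : Type*) [CommRing V] [IsDomain V] [ValuationRing V]
    (I J : Ideal V) (a : V) (ha : a ≠ 0) :
    (∀ r : V, r * a ∈ I → r ∈ J) ↔ (I ≤ Ideal.span {a} * J ∨ J = ⊤) := by
  constructor
  · intro h
    by_cases hJ : J = ⊤
    · exact Or.inr hJ
    · left
      intro x hx
      rcases ValuationRing.cond a x with ⟨c, hc | hc⟩
      · -- a * c = x
        rw [Ideal.mem_span_singleton_mul]
        refine ⟨c, h c (by rw [mul_comm, hc]; exact hx), hc⟩
      · -- x * c = a
        exfalso
        apply hJ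
        rw [Ideal.eq_top_iff_one]
        exact h 1 (by rw [one_mul, ← hc]; exact Ideal.mul_mem_right _ _ hx)
  · rintro (hIJ | rfl) r hr
    · have := hIJ hr
      rw [Ideal.mem_span_singleton_mul] at this
      obtain ⟨j, hj, hja⟩ := this
      have : r = j := by
        apply mul_left_cancel₀ ha
        rw [mul_comm a r, hja]
      rwa [this]
    · trivial
end

section
/- Let R be a commutative ring, a ∈ R and B an ideal of R. Then in the prime spectrum Spec R with the Zariski topology, V((rad(B) : a)) equals the topological closure of V(B) \ V(aR), where V(I) denotes the Zariski-closed set of prime ideals containing the ideal I and aR is the principal ideal generated by a. -/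
/-- In `Spec R` with the Zariski topology, `V((rad B : a))` is the closure of
`V(B) \ V(aR)`. -/
theorem stmt8 (R : Type*) [CommRing R] (a : R) (B : Ideal R) :
    PrimeSpectrum.zeroLocus ((Submodule.colon B.radical (Ideal.span {a})) : Set R) =
      closure (PrimeSpectrum.zeroLocus (B : Set R) \
        PrimeSpectrum.zeroLocus ((Ideal.span {a} : Ideal R) : Set R)) := by
  have key : Submodule.colon B.radical (Ideal.span {a}) =
      PrimeSpectrum.vanishingIdeal (PrimeSpectrum.zeroLocus (B : Set R) \
        PrimeSpectrum.zeroLocus ((Ideal.span {a} : Ideal R) : Set R)) := by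
    ext x
    simp only [Ideal.mem_colon_span_singleton, PrimeSpectrum.mem_vanishingIdeal, Set.mem_diff,
      PrimeSpectrum.mem_zeroLocus, SetLike.coe_subset_coe]
    rw [Ideal.radical_eq_sInf, Submodule.mem_sInf]
    constructor
    · rintro h p ⟨hBp, hap⟩
      rcases p.2.mem_or_mem (h p.asIdeal ⟨hBp, p.2⟩) with hx | ha
      · exact hx
      · exact absurd ((Ideal.span_singleton_le_iff_mem _).mpr ha) hap
    · intro h p ⟨hBp, hp⟩
      by_cases ha : a ∈ p
      · exact Ideal.mul_mem_left p x ha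
      · exact Ideal.mul_mem_right a p
          (h ⟨p, hp⟩ ⟨hBp, fun hle => ha (hle (Ideal.subset_span rfl))⟩)
  rw [key, PrimeSpectrum.zeroLocus_vanishingIdeal_eq_closure]
end

section
/- Let R be a commutative ring, n ≥ 2 a natural number, a, c ∈ R and b₁, …, bₙ, d₁, …, dₙ ∈ R. Suppose α, β, r₁, r₂, s₁, s₂ ∈ R satisfy b₁α = b₂r₂, b₂(α − 1) = b₁r₁, d₁β = d₂s₂ and d₂(β − 1) = d₁s₁. For elements x, y and tuples (e₁,…,e_k), (f₁,…,f_k), write (x, e₁,…,e_k, y, f₁,…,f_k) ∈ DPR_k(R) to mean: for all prime ideals 𝔭, 𝔮 of R with 𝔭 + 𝔮 ≠ R, either x ∈ 𝔭, or y ∈ 𝔮, or eᵢ ∉ 𝔭 for some i, or fᵢ ∉ 𝔮 for some i. Then (a, b₁,…,bₙ, c, d₁,…,dₙ) ∈ DPRₙ(R) if and only if all four of the following hold: (i) (aα, b₂,…,bₙ, cβ, d₂,…,dₙ) ∈ DPR_{n−1}(R); (ii) (aα, b₂,…,bₙ, c(β−1), d₁, d₃,…,dₙ) ∈ DPR_{n−1}(R);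 (iii) (a(α−1), b₁, b₃,…,bₙ, cβ, d₂,…,dₙ) ∈ DPR_{n−1}(R); (iv) (a(α−1), b₁, b₃,…,bₙ, c(β−1), d₁, d₃,…,dₙ) ∈ DPR_{n−1}(R). -/
/-- `(x, e, y, f) ∈ DPR(R)`: for all prime ideals `P, Q` with `P + Q ≠ R`,
either `x ∈ P`, or `y ∈ Q`, or some entry of `e` is not in `P`, or some entry
of `f` is not in `Q`. -/
def DPR {R : Type*} [CommRing R] {ι κ : Type*} (x : R) (e : ι → R) (y : R)
    (f : κ → R) : Prop :=
  ∀ P Q : Ideal R, P.IsPrime → Q.IsPrime → P ⊔ Q ≠ ⊤ →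
    x ∈ P ∨ y ∈ Q ∨ (∃ i, e i ∉ P) ∨ (∃ j, f j ∉ Q)

private lemma DPR.fwd {R : Type*} [CommRing R] {ι κ : Type*}
    {a c γ δ : R} {b : ι → R} {d : κ → R} {i j : ι} {k l : κ}
    (hij : j ≠ i) (hkl : l ≠ k)
    (hb : ∃ r, b i * γ = b j * r) (hd : ∃ s, d k * δ = d l * s)
    (h : DPR a b c d) :
    DPR (a * γ) (fun t : {t : ι // t ≠ i} => b t.1) (c * δ)
      (fun t : {t : κ // t ≠ k} => d t.1) := by
  intro P Q hP hQ hne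
  by_contra hcon
  push_neg at hcon
  obtain ⟨h1, h2, h3, h4⟩ := hcon
  have hγ : γ ∉ P := fun hm => h1 (P.mul_mem_left a hm)
  have hδ : δ ∉ Q := fun hm => h2 (Q.mul_mem_left c hm)
  obtain ⟨r, hr⟩ := hb
  obtain ⟨s, hs⟩ := hd
  have hbi : b i ∈ P := by
    have : b i * γ ∈ P := hr ▸ P.mul_mem_right r (h3 ⟨j, hij⟩)
    exact (hP.mem_or_mem this).resolve_right hγ
  have hdk : d k ∈ Q := by
    have : d k * δ ∈ Q := hs ▸ Q.mul_mem_right s (h4 ⟨l, hkl⟩)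
    exact (hQ.mem_or_mem this).resolve_right hδ
  rcases h P Q hP hQ hne with ha | hc | ⟨t, ht⟩ | ⟨t, ht⟩
  · exact h1 (P.mul_mem_right γ ha)
  · exact h2 (Q.mul_mem_right δ hc)
  · by_cases hti : t = i
    · exact ht (hti ▸ hbi)
    · exact ht (h3 ⟨t, hti⟩)
  · by_cases htk : t = k
    · exact ht (htk ▸ hdk)
    · exact ht (h4 ⟨t, htk⟩)

private lemma DPR.bwd {R : Type*} [CommRing R] {ι κ : Type*}
    {a c γ δ : R} {b : ι → R} {d : κ → R} {i : ι} {k : κ}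
    (h : DPR (a * γ) (fun t : {t : ι // t ≠ i} => b t.1) (c * δ)
      (fun t : {t : κ // t ≠ k} => d t.1))
    {P Q : Ideal R} (hP : P.IsPrime) (hQ : Q.IsPrime) (hne : P ⊔ Q ≠ ⊤)
    (hγ : γ ∉ P) (hδ : δ ∉ Q) :
    a ∈ P ∨ c ∈ Q ∨ (∃ t, b t ∉ P) ∨ (∃ t, d t ∉ Q) := by
  rcases h P Q hP hQ hne with ha | hc | ⟨t, ht⟩ | ⟨t, ht⟩
  · exact Or.inl ((hP.mem_or_mem ha).resolve_right hγ)
  · exact Or.inr (Or.inl ((hQ.mem_or_mem hc).resolve_right hδ))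
  · exact Or.inr (Or.inr (Or.inl ⟨t.1, ht⟩))
  · exact Or.inr (Or.inr (Or.inr ⟨t.1, ht⟩))

/-- The inductive step in the proof that `DPR(R)` recursive implies `DPR_n(R)`
recursive: with `α, β, r₁, r₂, s₁, s₂` as given,
`(a, b₁,…,bₙ, c, d₁,…,dₙ) ∈ DPRₙ(R)` iff the four displayed membership
conditions in `DPR_{n-1}(R)` hold. -/
theorem stmt10 {R : Type*} [CommRing R] (n : ℕ) (hn : 2 ≤ n)
    (a c α β r₁ r₂ s₁ s₂ : R) (b d : Fin n → R)
    (hb1 : b ⟨0, by omega⟩ * α = b ⟨1, by omega⟩ * r₂)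
    (hb2 : b ⟨1, by omega⟩ * (α - 1) = b ⟨0, by omega⟩ * r₁)
    (hd1 : d ⟨0, by omega⟩ * β = d ⟨1, by omega⟩ * s₂)
    (hd2 : d ⟨1, by omega⟩ * (β - 1) = d ⟨0, by omega⟩ * s₁) :
    DPR a b c d ↔
      (DPR (a * α) (fun i : {i : Fin n // i ≠ ⟨0, by omega⟩} => b i.1)
          (c * β) (fun j : {j : Fin n // j ≠ ⟨0, by omega⟩} => d j.1) ∧
       DPR (a * α) (fun i : {i : Fin n // i ≠ ⟨0, by omega⟩} => b i.1)
          (c * (β - 1)) (fun j : {j : Fin n // j ≠ ⟨1, by omega⟩} => d j.1) ∧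
       DPR (a * (α - 1)) (fun i : {i : Fin n // i ≠ ⟨1, by omega⟩} => b i.1)
          (c * β) (fun j : {j : Fin n // j ≠ ⟨0, by omega⟩} => d j.1) ∧
       DPR (a * (α - 1)) (fun i : {i : Fin n // i ≠ ⟨1, by omega⟩} => b i.1)
          (c * (β - 1)) (fun j : {j : Fin n // j ≠ ⟨1, by omega⟩} => d j.1)) := by
  have h01 : (⟨1, by omega⟩ : Fin n) ≠ ⟨0, by omega⟩ := by simp [Fin.ext_iff]
  have h10 : (⟨0, by omega⟩ : Fin n) ≠ ⟨1, by omega⟩ := by simp [Fin.ext_iff]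
  constructor
  · intro h
    exact ⟨DPR.fwd h01 h01 ⟨r₂, hb1⟩ ⟨s₂, hd1⟩ h,
      DPR.fwd h01 h10 ⟨r₂, hb1⟩ ⟨s₁, hd2⟩ h,
      DPR.fwd h10 h01 ⟨r₁, hb2⟩ ⟨s₂, hd1⟩ h,
      DPR.fwd h10 h10 ⟨r₁, hb2⟩ ⟨s₁, hd2⟩ h⟩
  · rintro ⟨H1, H2, H3, H4⟩ P Q hP hQ hne
    have hα : α ∉ P ∨ (α - 1) ∉ P := by
      by_contra hc; push_neg at hc
      have h1 : (1 : R) ∈ P := by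
        have := P.sub_mem hc.1 hc.2; simpa using this
      exact hP.ne_top ((Ideal.eq_top_iff_one P).mpr h1)
    have hβ : β ∉ Q ∨ (β - 1) ∉ Q := by
      by_contra hc; push_neg at hc
      have h1 : (1 : R) ∈ Q := by
        have := Q.sub_mem hc.1 hc.2; simpa using this
      exact hQ.ne_top ((Ideal.eq_top_iff_one Q).mpr h1)
    rcases hα with hα | hα <;> rcases hβ with hβ | hβ
    · exact DPR.bwd H1 hP hQ hne hα hβ
    · exact DPR.bwd H2 hP hQ hne hα hβ
    · exact DPR.bwd H3 hP hQ hne hα hβ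
    · exact DPR.bwd H4 hP hQ hne hα hβ
end

section
/- Let R be a commutative ring, a, b ∈ R and M an R-module. Then: (1) the cardinality of the quotient aM/abM equals the cardinality of M/({m ∈ M : a·m = 0} + bM); and (2) the cardinality of {m ∈ M : (ab)·m = 0}/{m ∈ M : a·m = 0} equals the cardinality of aM ∩ {m ∈ M : b·m = 0}. -/
/-- For a commutative ring `R`, `a, b ∈ R` and an `R`-module `M`:
(1) `|aM/abM| = |M/(ker a + bM)|`, and
(2) `|ker(ab)/ker(a)| = |aM ∩ ker(b)|`. -/
theorem stmt11 (R : Type*) [CommRing R] (M : Type*) [AddCommGroup M]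
    [Module R M] (a b : R) :
    Cardinal.mk
        (↥(LinearMap.range (LinearMap.lsmul R M a)) ⧸
          Submodule.comap (LinearMap.range (LinearMap.lsmul R M a)).subtype
            (LinearMap.range (LinearMap.lsmul R M (a * b)))) =
      Cardinal.mk
        (M ⧸ (LinearMap.ker (LinearMap.lsmul R M a) ⊔
          LinearMap.range (LinearMap.lsmul R M b))) ∧
    Cardinal.mk
        (↥(LinearMap.ker (LinearMap.lsmul R M (a * b))) ⧸
          Submodule.comap (LinearMap.ker (LinearMap.lsmul R M (a * b))).subtype
            (LinearMap.ker (LinearMap.lsmul R M a))) =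
      Cardinal.mk
        ↥(LinearMap.range (LinearMap.lsmul R M a) ⊓
          LinearMap.ker (LinearMap.lsmul R M b)) := by
  constructor
  · set N := Submodule.comap (LinearMap.range (LinearMap.lsmul R M a)).subtype
      (LinearMap.range (LinearMap.lsmul R M (a * b))) with hN
    let f : M →ₗ[R] (↥(LinearMap.range (LinearMap.lsmul R M a)) ⧸ N) :=
      N.mkQ.comp (LinearMap.lsmul R M a).rangeRestrict
    have hsurj : Function.Surjective f :=
      (Submodule.mkQ_surjective _).comp (LinearMap.surjective_rangeRestrict _)
    have hker : LinearMap.ker f = LinearMap.ker (LinearMap.lsmul R M a) ⊔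
        LinearMap.range (LinearMap.lsmul R M b) := by
      ext m
      simp only [f, LinearMap.mem_ker, LinearMap.comp_apply, Submodule.mkQ_apply,
        Submodule.Quotient.mk_eq_zero, hN, Submodule.mem_comap, Submodule.subtype_apply,
        LinearMap.rangeRestrict, LinearMap.codRestrict_apply, LinearMap.mem_range,
        LinearMap.lsmul_apply, Submodule.mem_sup]
      constructor
      · rintro ⟨n, hn⟩
        exact ⟨m - b • n, by simp [smul_sub, ← hn, mul_smul], b • n, ⟨n, rfl⟩, by abel⟩
      · rintro ⟨k, hk, -, ⟨n, rfl⟩, rfl⟩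
        exact ⟨n, by simp [smul_add, hk, mul_smul]⟩
    exact (Cardinal.mk_congr ((Submodule.quotEquivOfEq _ _ hker.symm).trans
      (f.quotKerEquivOfSurjective hsurj)).toEquiv).symm
  · let g : ↥(LinearMap.ker (LinearMap.lsmul R M (a * b))) →ₗ[R] M :=
      (LinearMap.lsmul R M a).comp (LinearMap.ker (LinearMap.lsmul R M (a * b))).subtype
    have hker : LinearMap.ker g =
        Submodule.comap (LinearMap.ker (LinearMap.lsmul R M (a * b))).subtype
          (LinearMap.ker (LinearMap.lsmul R M a)) := by
      ext m
      simp [g]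
    have hrange : LinearMap.range g = LinearMap.range (LinearMap.lsmul R M a) ⊓
        LinearMap.ker (LinearMap.lsmul R M b) := by
      ext x
      simp only [g, LinearMap.mem_range, LinearMap.comp_apply, Submodule.subtype_apply,
        LinearMap.lsmul_apply, Submodule.mem_inf, LinearMap.mem_ker]
      constructor
      · rintro ⟨⟨m, hm⟩, rfl⟩
        refine ⟨⟨m, rfl⟩, ?_⟩
        rw [smul_comm]; simpa [mul_smul] using hm
      · rintro ⟨⟨m, rfl⟩, hb⟩
        exact ⟨⟨m, by simpa [mul_smul, mul_comm a b] using hb⟩, rfl⟩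
    exact Cardinal.mk_congr (((Submodule.quotEquivOfEq _ _ hker.symm).trans
      g.quotKerEquivRange).trans (LinearEquiv.ofEq _ _ hrange)).toEquiv
end

section
/- Let V be a valuation domain, d ∈ V, and U a uniserial V-module such that the submodule dU is finite and nonzero. Then there exists an ideal I of V such that U is isomorphic as a V-module to V/dI, and dU is isomorphic as a V-module to V/I. Here dI denotes the product of the principal ideal (d) with I. -/
/-- If `U` is a uniserial module over a valuation domain `V`, `d ∈ V`, and the
submodule `dU` is finite and nonzero, then `U ≅ V/dI` and `dU ≅ V/I` for some
ideal `I` of `V`. -/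
theorem stmt12 (V : Type*) [CommRing V] [IsDomain V] [ValuationRing V]
    (U : Type*) [AddCommGroup U] [Module V U]
    (huni : ∀ N₁ N₂ : Submodule V U, N₁ ≤ N₂ ∨ N₂ ≤ N₁) (d : V)
    (hfin : Finite ↥(LinearMap.range (LinearMap.lsmul V U d)))
    (hne : LinearMap.range (LinearMap.lsmul V U d) ≠ ⊥) :
    ∃ I : Ideal V,
      Nonempty (U ≃ₗ[V] V ⧸ (Ideal.span {d} * I)) ∧
      Nonempty (↥(LinearMap.range (LinearMap.lsmul V U d)) ≃ₗ[V] V ⧸ I) := by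
  set W := LinearMap.range (LinearMap.lsmul V U d) with hWdef
  -- find a generator of W
  obtain ⟨w₀, -, hmax⟩ := Set.Finite.exists_maximalFor
    (fun w : W => Submodule.span V {(w : U)}) Set.univ Set.finite_univ
    ⟨⟨0, W.zero_mem⟩, trivial⟩
  have hle : ∀ w : W, Submodule.span V {(w : U)} ≤ Submodule.span V {(w₀ : U)} := by
    intro w
    rcases huni (Submodule.span V {(w : U)}) (Submodule.span V {(w₀ : U)}) with h | h
    · exact h
    · exact (hmax (j := w) trivial h).ge
  have hWspan : W = Submodule.span V {(w₀ : U)} := by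
    apply le_antisymm
    · intro x hx
      exact hle ⟨x, hx⟩ (Submodule.mem_span_singleton_self _)
    · rw [Submodule.span_le, Set.singleton_subset_iff]
      exact w₀.2
  obtain ⟨u₀, hu₀⟩ := w₀.2
  have hu₀' : d • u₀ = (w₀ : U) := hu₀
  have hw0ne : (w₀ : U) ≠ 0 := by
    intro h
    apply hne
    rw [hWspan, h, Submodule.span_zero_singleton]
  -- U is generated by u₀
  have hker : LinearMap.ker (LinearMap.lsmul V U d) ≤ Submodule.span V {u₀} := by
    rcases huni (LinearMap.ker (LinearMap.lsmul V U d)) (Submodule.span V {u₀}) with h | h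
    · exact h
    · exfalso
      apply hw0ne
      have h0 : u₀ ∈ LinearMap.ker (LinearMap.lsmul V U d) :=
        h (Submodule.mem_span_singleton_self _)
      rw [LinearMap.mem_ker, LinearMap.lsmul_apply] at h0
      rw [← hu₀', h0]
  have hU : Submodule.span V {u₀} = ⊤ := by
    rw [eq_top_iff]
    intro u _
    have h1 : d • u ∈ Submodule.span V {(w₀ : U)} := by
      rw [← hWspan]
      exact ⟨u, rfl⟩
    obtain ⟨c, hc⟩ := Submodule.mem_span_singleton.mp h1
    have hk : u - c • u₀ ∈ LinearMap.ker (LinearMap.lsmul V U d) := by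
      rw [LinearMap.mem_ker, LinearMap.lsmul_apply, smul_sub, smul_comm d c u₀, hu₀', hc,
        sub_self]
    have h2 := hker hk
    have : u = (u - c • u₀) + c • u₀ := by abel
    rw [this]
    exact Submodule.add_mem _ h2 (Submodule.smul_mem _ _ (Submodule.mem_span_singleton_self _))
  -- the maps
  set φ := LinearMap.toSpanSingleton V U u₀ with hφdef
  have hφsurj : Function.Surjective φ := by
    rw [← LinearMap.range_eq_top, ← LinearMap.span_singleton_eq_range, hU]
  set I : Ideal V := Submodule.comap (LinearMap.lsmul V V d) (LinearMap.ker φ) with hIdef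
  have hmemI : ∀ c : V, c ∈ I ↔ (d * c) • u₀ = 0 := by
    intro c
    rw [hIdef, Submodule.mem_comap, LinearMap.lsmul_apply, LinearMap.mem_ker, hφdef,
      LinearMap.toSpanSingleton_apply, smul_eq_mul]
  have hJ : Ideal.span {d} * I = LinearMap.ker φ := by
    apply le_antisymm
    · rw [Ideal.mul_le]
      intro r hr s hs
      obtain ⟨c, rfl⟩ := Ideal.mem_span_singleton.mp hr
      rw [LinearMap.mem_ker, hφdef, LinearMap.toSpanSingleton_apply]
      have hs' := (hmemI s).mp hs
      calc (d * c * s) • u₀ = c • ((d * s) • u₀) := by rw [← mul_smul]; ring_nf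
        _ = 0 := by rw [hs', smul_zero]
    · intro j hj
      rw [LinearMap.mem_ker, hφdef, LinearMap.toSpanSingleton_apply] at hj
      obtain ⟨c, hc | hc⟩ := ValuationRing.cond d j
      · -- d * c = j
        have hcI : c ∈ I := (hmemI c).mpr (by rw [hc]; exact hj)
        rw [← hc]
        exact Ideal.mul_mem_mul (Ideal.mem_span_singleton_self d) hcI
      · -- j * c = d
        exfalso
        apply hw0ne
        rw [← hu₀', ← hc, mul_comm, mul_smul, hj, smul_zero]
  set ψ := LinearMap.toSpanSingleton V W w₀ with hψdef
  have hψsurj : Function.Surjective ψ := by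
    intro w
    have hw : (w : U) ∈ Submodule.span V {(w₀ : U)} := hWspan ▸ w.2
    obtain ⟨c, hc⟩ := Submodule.mem_span_singleton.mp hw
    exact ⟨c, Subtype.ext (by rw [hψdef, LinearMap.toSpanSingleton_apply]; exact hc)⟩
  have hkerψ : LinearMap.ker ψ = I := by
    ext c
    rw [LinearMap.mem_ker, hψdef, LinearMap.toSpanSingleton_apply, hmemI,
      mul_comm, mul_smul, hu₀']
    constructor
    · intro h
      have := congrArg (Subtype.val) h
      simpa using this
    · intro h
      exact Subtype.ext (by simpa using h)
  refine ⟨I, ⟨?_⟩, ⟨?_⟩⟩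
  · exact (LinearMap.quotKerEquivOfSurjective φ hφsurj).symm.trans
      (Submodule.quotEquivOfEq _ _ hJ.symm)
  · exact (LinearMap.quotKerEquivOfSurjective ψ hψsurj).symm.trans
      (Submodule.quotEquivOfEq _ _ hkerψ)
end

section
/- Let V be a valuation domain, I a nonzero ideal of V, and b, c ∈ I both nonzero. Consider the V-module M = I/bcV (note that bc ∈ I, so the principal ideal bcV is contained in I). Then c·M is contained in the b-torsion submodule {m ∈ M : b·m = 0}, and the quotient module {m ∈ M : b·m = 0}/cM is isomorphic as a V-module to V/I. -/
/-- The `V`-module `I/bcV`: the quotient of the ideal `I` (as a `V`-module)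
by the principal ideal `bcV ⊆ I`. -/
abbrev IdealQuot (V : Type*) [CommRing V] (I : Ideal V) (x : V) : Type _ :=
  ↥I ⧸ Submodule.comap I.subtype (Ideal.span {x} : Ideal V)

/-- For a nonzero ideal `I` of a valuation domain `V` and nonzero `b, c ∈ I`,
in the module `M = I/bcV` one has `cM ⊆ {m : b·m = 0}` and
`{m : b·m = 0}/cM ≅ V/I`. -/
theorem stmt13 (V : Type*) [CommRing V] [IsDomain V] [ValuationRing V]
    (I : Ideal V) (hI : I ≠ ⊥) (b c : V) (hb : b ≠ 0) (hc : c ≠ 0)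
    (hbI : b ∈ I) (hcI : c ∈ I) :
    LinearMap.range (LinearMap.lsmul V (IdealQuot V I (b * c)) c) ≤
      LinearMap.ker (LinearMap.lsmul V (IdealQuot V I (b * c)) b) ∧
    Nonempty
      ((↥(LinearMap.ker (LinearMap.lsmul V (IdealQuot V I (b * c)) b)) ⧸
          Submodule.comap
            (LinearMap.ker (LinearMap.lsmul V (IdealQuot V I (b * c)) b)).subtype
            (LinearMap.range (LinearMap.lsmul V (IdealQuot V I (b * c)) c)))
        ≃ₗ[V] V ⧸ I) := by
  classical
  set N : Submodule V ↥I := Submodule.comap I.subtype (Ideal.span {b * c} : Ideal V) with hNdef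
  -- every element of M is killed by b*c
  have hbc : ∀ m : IdealQuot V I (b * c), (b * c) • m = 0 := by
    intro m
    obtain ⟨x, rfl⟩ := Submodule.Quotient.mk_surjective N m
    rw [← Submodule.Quotient.mk_smul, Submodule.Quotient.mk_eq_zero]
    show ((b * c) • x : ↥I) ∈ N
    simp only [hNdef, Submodule.mem_comap, Submodule.coe_subtype, Submodule.coe_smul,
      smul_eq_mul]
    exact Ideal.mem_span_singleton.mpr (dvd_mul_right _ _)
  constructor
  · rintro m ⟨n, rfl⟩
    simp only [LinearMap.mem_ker, LinearMap.lsmul_apply, smul_smul]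
    exact hbc n
  set K := LinearMap.ker (LinearMap.lsmul V (IdealQuot V I (b * c)) b) with hKdef
  set R := LinearMap.range (LinearMap.lsmul V (IdealQuot V I (b * c)) c) with hRdef
  set Q : Submodule V ↥K := Submodule.comap K.subtype R with hQdef
  -- the map V → M, v ↦ class of v•c
  set ψ : V →ₗ[V] IdealQuot V I (b * c) :=
    N.mkQ.comp (LinearMap.toSpanSingleton V ↥I ⟨c, hcI⟩) with hψdef
  have hψ : ∀ v : V, ψ v = Submodule.Quotient.mk (v • (⟨c, hcI⟩ : ↥I)) := fun v => rfl
  have hψK : ∀ v : V, ψ v ∈ K := by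
    intro v
    rw [hKdef, LinearMap.mem_ker, LinearMap.lsmul_apply, hψ,
      ← Submodule.Quotient.mk_smul, Submodule.Quotient.mk_eq_zero]
    show (b • v • (⟨c, hcI⟩ : ↥I) : ↥I) ∈ N
    simp only [hNdef, Submodule.mem_comap, Submodule.coe_subtype, Submodule.coe_smul,
      smul_eq_mul]
    exact Ideal.mem_span_singleton.mpr ⟨v, by ring⟩
  set f : V →ₗ[V] ↥K := ψ.codRestrict K hψK with hfdef
  set g : V →ₗ[V] ↥K ⧸ Q := Q.mkQ.comp f with hgdef
  have hfsurj : Function.Surjective f := by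
    rintro ⟨m, hm⟩
    obtain ⟨x, rfl⟩ := Submodule.Quotient.mk_surjective N m
    rw [hKdef, LinearMap.mem_ker, LinearMap.lsmul_apply, ← Submodule.Quotient.mk_smul,
      Submodule.Quotient.mk_eq_zero] at hm
    have hx : b * (x : V) ∈ Ideal.span ({b * c} : Set V) := hm
    obtain ⟨v, hv⟩ := Ideal.mem_span_singleton.mp hx
    have hxv : (x : V) = v * c := by
      apply mul_left_cancel₀ hb
      rw [hv]; ring
    refine ⟨v, Subtype.ext ?_⟩
    show ψ v = Submodule.Quotient.mk x
    rw [hψ]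
    congr 1
    exact Subtype.ext (by simpa using hxv.symm)
  have hgsurj : Function.Surjective g := by
    rw [hgdef]
    exact (Submodule.mkQ_surjective Q).comp hfsurj
  have hker : LinearMap.ker g = I := by
    ext v
    rw [LinearMap.mem_ker, hgdef, LinearMap.comp_apply, Submodule.mkQ_apply, Submodule.Quotient.mk_eq_zero]
    have hQmem : f v ∈ Q ↔ ψ v ∈ R := Iff.rfl
    rw [hQmem, hRdef]
    constructor
    · rintro ⟨m, hm⟩
      obtain ⟨y, rfl⟩ := Submodule.Quotient.mk_surjective N m
      rw [LinearMap.lsmul_apply, ← Submodule.Quotient.mk_smul, hψ,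
        Submodule.Quotient.eq] at hm
      have hm' : c * (y : V) - v * c ∈ Ideal.span ({b * c} : Set V) := hm
      obtain ⟨w, hw⟩ := Ideal.mem_span_singleton.mp hm'
      have hveq : v = (y : V) - b * w := by
        apply mul_left_cancel₀ hc
        have : c * (y : V) - v * c = b * c * w := hw
        ring_nf
        ring_nf at this
        linear_combination -this
      rw [hveq]
      exact sub_mem y.2 (I.mul_mem_right w hbI)
    · intro hv
      refine ⟨Submodule.Quotient.mk (⟨v, hv⟩ : ↥I), ?_⟩
      rw [LinearMap.lsmul_apply, ← Submodule.Quotient.mk_smul, hψ]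
      congr 1
      exact Subtype.ext (by simp [mul_comm])
  exact ⟨((Submodule.quotEquivOfEq I (LinearMap.ker g) hker.symm).trans
    (g.quotKerEquivOfSurjective hgsurj)).symm⟩
end

section
/- Let V be a valuation domain, c ∈ V, and U a uniserial V-module such that the quotient U/cU is finite and nontrivial. Then there exists an ideal K of V with U isomorphic as a V-module to V/K, and moreover either c ∈ K (so that c annihilates U), or K = cI for some ideal I of V, in which case U/cU is isomorphic as a V-module to V/cV. -/
/-- If `U` is a uniserial module over a valuation domain `V`, `c ∈ V`, and
`U/cU` is finite and nontrivial, then `U ≅ V/K` for some ideal `K`, and either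
`c ∈ K`, or `K = cI` for some ideal `I` and `U/cU ≅ V/cV`. -/
theorem stmt14 (V : Type*) [CommRing V] [IsDomain V] [ValuationRing V]
    (U : Type*) [AddCommGroup U] [Module V U]
    (huni : ∀ N₁ N₂ : Submodule V U, N₁ ≤ N₂ ∨ N₂ ≤ N₁) (c : V)
    (hfin : Finite (U ⧸ LinearMap.range (LinearMap.lsmul V U c)))
    (hnt : Nontrivial (U ⧸ LinearMap.range (LinearMap.lsmul V U c))) :
    ∃ K : Ideal V, Nonempty (U ≃ₗ[V] V ⧸ K) ∧
      (c ∈ K ∨ ∃ I : Ideal V, K = Ideal.span {c} * I ∧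
        Nonempty ((U ⧸ LinearMap.range (LinearMap.lsmul V U c)) ≃ₗ[V]
          V ⧸ (Ideal.span {c} : Ideal V))) := by
  classical
  set R := LinearMap.range (LinearMap.lsmul V U c) with hRdef
  haveI : Fintype (U ⧸ R) := Fintype.ofFinite _
  -- pick a maximal cyclic submodule among lifts of the (finitely many) classes
  obtain ⟨N, hNmem, hNmax⟩ :=
    (Finset.univ.image fun q : U ⧸ R => Submodule.span V {Quotient.out q}).exists_maximal
      (Finset.image_nonempty.mpr Finset.univ_nonempty)
  obtain ⟨q₀, -, hq₀⟩ := Finset.mem_image.mp hNmem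
  set u : U := Quotient.out q₀ with hu
  -- every cyclic lift submodule is ≤ span {u}
  have hmax : ∀ q : U ⧸ R, Submodule.span V {Quotient.out q} ≤ Submodule.span V {u} := by
    intro q
    have hmem : Submodule.span V {Quotient.out q} ∈
        Finset.univ.image fun q : U ⧸ R => Submodule.span V {Quotient.out q} :=
      Finset.mem_image.mpr ⟨q, Finset.mem_univ _, rfl⟩
    have hnlt : ¬ N < Submodule.span V {Quotient.out q} :=
      fun hlt => lt_irrefl _ (lt_of_lt_of_le hlt (hNmax hmem hlt.le))
    rcases huni (Submodule.span V {Quotient.out q}) (Submodule.span V {u}) with h | h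
    · exact h
    · by_contra hcon
      exact hnlt (lt_of_le_of_ne (hq₀ ▸ h) (fun he => hcon (le_of_eq (hq₀ ▸ he.symm))))
  -- U = span {u} ⊔ R
  have htop : Submodule.span V {u} ⊔ R = ⊤ := by
    rw [eq_top_iff]
    intro v _
    set q : U ⧸ R := Submodule.Quotient.mk v with hq
    have hout : Submodule.Quotient.mk (Quotient.out q) = q := Quotient.out_eq q
    have hdiff : Quotient.out q - v ∈ R := by
      rw [← Submodule.Quotient.eq R, hout]
    have h1 : Quotient.out q ∈ Submodule.span V {u} :=
      hmax q (Submodule.mem_span_singleton_self _)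
    have : v = Quotient.out q - (Quotient.out q - v) := by abel
    rw [this]
    exact Submodule.sub_mem _ (Submodule.mem_sup_left h1) (Submodule.mem_sup_right hdiff)
  -- R ≤ span {u}, so U = span {u}
  have hRle : R ≤ Submodule.span V {u} := by
    rcases huni R (Submodule.span V {u}) with h | h
    · exact h
    · exfalso
      have : R = ⊤ := by
        rw [eq_top_iff, ← htop]
        exact sup_le h le_rfl
      have : Subsingleton (U ⧸ R) :=
        ((Submodule.unique_quotient_iff_eq_top).mpr this).some.instSubsingleton
      exact not_subsingleton_iff_nontrivial.mpr hnt this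
  have hspan : Submodule.span V {u} = ⊤ := by
    rw [← htop, left_eq_sup]; exact hRle
  -- the cyclic structure map
  set g : V →ₗ[V] U := LinearMap.toSpanSingleton V U u with hg
  have hgsurj : Function.Surjective g := by
    rw [← LinearMap.range_eq_top, ← LinearMap.span_singleton_eq_range, hspan]
  set K : Ideal V := LinearMap.ker g with hK
  have e : U ≃ₗ[V] V ⧸ K := (g.quotKerEquivOfSurjective hgsurj).symm
  refine ⟨K, ⟨e⟩, ?_⟩
  by_cases hc : c ∈ K
  · exact Or.inl hc
  · refine Or.inr ⟨K.colon (Ideal.span {c}), ?_, ?_⟩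
    · -- K = (c) * I
      apply le_antisymm
      · intro k hk
        rcases ValuationRing.cond c k with ⟨d, hd | hd⟩
        · have hdI : d ∈ K.colon (Ideal.span {c}) :=
            Ideal.mem_colon_span_singleton.mpr (by rwa [mul_comm, hd])
          rw [← hd]
          exact Ideal.mul_mem_mul (Ideal.mem_span_singleton_self c) hdI
        · exact absurd (hd ▸ Ideal.mul_mem_right d K hk) hc
      · rw [Ideal.mul_le]
        intro r hr s hs
        obtain ⟨x, hx⟩ := Ideal.mem_span_singleton'.mp hr
        have : s * c ∈ K := Ideal.mem_colon_span_singleton.mp hs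
        have hrs : r * s = x * (s * c) := by rw [← hx]; ring
        rw [hrs]
        exact Ideal.mul_mem_left _ _ this
    · -- U / cU ≃ V / (c)
      set h : V →ₗ[V] U ⧸ R := R.mkQ ∘ₗ g with hh
      have hhsurj : Function.Surjective h :=
        (R.mkQ_surjective).comp hgsurj
      have hker : LinearMap.ker h = Ideal.span {c} := by
        apply le_antisymm
        · intro r hr
          have : g r ∈ R := by
            simpa [hh, LinearMap.mem_ker] using hr
          obtain ⟨w, hw⟩ := this
          have hwmem : w ∈ Submodule.span V {u} := hspan ▸ Submodule.mem_top
          obtain ⟨s, hs⟩ := Submodule.mem_span_singleton.mp hwmem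
          have hgr : g r = (c * s) • u := by
            rw [← hw, ← hs, LinearMap.lsmul_apply, mul_smul, smul_comm]
          have hKmem : r - c * s ∈ K := by
            rw [hK, LinearMap.mem_ker, map_sub, hgr]
            simp [hg, LinearMap.toSpanSingleton_apply]
          have hKle : K ≤ Ideal.span {c} := by
            intro k hk
            rcases ValuationRing.cond c k with ⟨d, hd | hd⟩
            · exact Ideal.mem_span_singleton'.mpr ⟨d, by rw [mul_comm, hd]⟩
            · exact absurd (hd ▸ Ideal.mul_mem_right d K hk) hc
          have h1 : r - c * s ∈ Ideal.span {c} := hKle hKmem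
          have h2 : c * s ∈ Ideal.span {c} :=
            Ideal.mem_span_singleton'.mpr ⟨s, mul_comm s c⟩
          simpa using Ideal.add_mem _ h1 h2
        · rw [Ideal.span_le]
          intro x hx
          rw [Set.mem_singleton_iff] at hx
          subst hx
          simp only [SetLike.mem_coe, LinearMap.mem_ker, hh, LinearMap.comp_apply]
          rw [Submodule.mkQ_apply, Submodule.Quotient.mk_eq_zero]
          exact ⟨u, rfl⟩
      exact ⟨(h.quotKerEquivOfSurjective hhsurj).symm.trans
        (Submodule.quotEquivOfEq _ _ hker)⟩
end

section
/- Let R be a commutative ring, M an R-module, c, d ∈ R and D ≥ 1 a natural number. Suppose that every m ∈ M with (c^{D−1}·d)·m = 0 lies in cM. Then, as cardinals, |dM| = |M/cM|^D · |(c^D·d)M|. -/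
open Cardinal

lemma cardA (R : Type*) [CommRing R] (M : Type*) [AddCommGroup M] [Module R M]
    (c d : R)
    (h : ∀ m : M, d • m = 0 → m ∈ LinearMap.range (LinearMap.lsmul R M c)) :
    Cardinal.mk ↥(LinearMap.range (LinearMap.lsmul R M d)) =
      Cardinal.mk (M ⧸ LinearMap.range (LinearMap.lsmul R M c)) *
        Cardinal.mk ↥(LinearMap.range (LinearMap.lsmul R M (c * d))) := by
  set p := LinearMap.range (LinearMap.lsmul R M c) with hp
  set q := LinearMap.range (LinearMap.lsmul R M d) with hq
  set r := LinearMap.range (LinearMap.lsmul R M (c * d)) with hr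
  have hrq : r ≤ q := by
    rintro x ⟨m, rfl⟩
    exact ⟨c • m, by simp only [LinearMap.lsmul_apply]; rw [mul_comm, mul_smul]⟩
  set r' : Submodule R q := r.comap q.subtype with hr'
  -- step 1 : mk q = mk (q ⧸ r') * mk r'
  have step1 : Cardinal.mk q = Cardinal.mk (q ⧸ r') * Cardinal.mk r' := by
    have e : (q : Type _) ≃ (q ⧸ r') × r' :=
      AddSubgroup.addGroupEquivQuotientProdAddSubgroup (s := r'.toAddSubgroup)
    rw [Cardinal.mk_congr e, Cardinal.mk_prod, Cardinal.lift_id, Cardinal.lift_id]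
  -- step 2 : mk r' = mk r
  have step2 : Cardinal.mk r' = Cardinal.mk r :=
    Cardinal.mk_congr (Submodule.comapSubtypeEquivOfLe hrq).toEquiv
  -- step 3 : mk (q ⧸ r') = mk (M ⧸ p)
  have step3 : Cardinal.mk (q ⧸ r') = Cardinal.mk (M ⧸ p) := by
    set f : M →ₗ[R] q ⧸ r' := r'.mkQ.comp (LinearMap.lsmul R M d).rangeRestrict with hf
    have hsurj : Function.Surjective f := by
      exact (Submodule.mkQ_surjective r').comp (LinearMap.surjective_rangeRestrict _)
    have hker : LinearMap.ker f = p := by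
      ext m
      simp only [hf, LinearMap.mem_ker, LinearMap.comp_apply, Submodule.mkQ_apply,
        Submodule.Quotient.mk_eq_zero, hr', Submodule.mem_comap]
      constructor
      · intro hm
        have hm' : d • m ∈ r := hm
        obtain ⟨m', hm'⟩ := hm'
        have : d • (m - c • m') = 0 := by
          have : (c * d) • m' = d • m := hm'
          rw [smul_sub, sub_eq_zero, ← this, mul_comm c d, mul_smul]
        obtain ⟨x, hx⟩ := h _ this
        have : (LinearMap.lsmul R M c) (x + m') = m := by
          simp only [map_add]
          rw [hx]
          simp only [LinearMap.lsmul_apply]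
          abel
        exact ⟨x + m', this⟩
      · rintro ⟨x, rfl⟩
        show d • _ ∈ r
        exact ⟨x, by simp [mul_comm c d, mul_smul]⟩
    rw [Cardinal.mk_congr (f.quotKerEquivOfSurjective hsurj).toEquiv.symm, hker]
  rw [step1, step2, step3]

lemma cardAux (R : Type*) [CommRing R] (M : Type*) [AddCommGroup M] [Module R M]
    (c : R) : ∀ D : ℕ, ∀ d : R,
    (∀ m : M, (c ^ D * d) • m = 0 → m ∈ LinearMap.range (LinearMap.lsmul R M c)) →
    Cardinal.mk ↥(LinearMap.range (LinearMap.lsmul R M d)) =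
      Cardinal.mk (M ⧸ LinearMap.range (LinearMap.lsmul R M c)) ^ (D + 1) *
        Cardinal.mk ↥(LinearMap.range (LinearMap.lsmul R M (c ^ (D + 1) * d))) := by
  intro D
  induction D with
  | zero =>
    intro d h
    simp only [pow_zero, one_mul] at h
    simpa [pow_one] using cardA R M c d h
  | succ n ih =>
    intro d h
    have h0 : ∀ m : M, d • m = 0 → m ∈ LinearMap.range (LinearMap.lsmul R M c) := by
      intro m hm
      exact h m (by rw [mul_smul, hm, smul_zero])
    have h1 := ih (c * d) (by
      intro m hm
      apply h m
      have : c ^ (n + 1) * d = c ^ n * (c * d) := by ring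
      rwa [this])
    have e : c ^ (n + 1) * (c * d) = c ^ (n + 1 + 1) * d := by ring
    rw [e] at h1
    rw [cardA R M c d h0, h1]; ring

/-- If every `m` with `(c^(D-1)·d)·m = 0` lies in `cM`, then
`|dM| = |M/cM|^D · |(c^D·d)M|` as cardinals. -/
theorem stmt15 (R : Type*) [CommRing R] (M : Type*) [AddCommGroup M]
    [Module R M] (c d : R) (D : ℕ) (hD : 1 ≤ D)
    (h : ∀ m : M, (c ^ (D - 1) * d) • m = 0 →
      m ∈ LinearMap.range (LinearMap.lsmul R M c)) :
    Cardinal.mk ↥(LinearMap.range (LinearMap.lsmul R M d)) =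
      Cardinal.mk (M ⧸ LinearMap.range (LinearMap.lsmul R M c)) ^ D *
        Cardinal.mk ↥(LinearMap.range (LinearMap.lsmul R M (c ^ D * d))) := by
  obtain ⟨n, rfl⟩ : ∃ n, D = n + 1 := ⟨D - 1, by omega⟩
  simp only [Nat.add_sub_cancel] at h
  exact cardAux R M c n d h
end

section
/- Let R be a commutative ring, M an R-module, c, d ∈ R and D ≥ 1 a natural number. If (c^D·d)·m = 0 for every m ∈ M, then, as cardinals, |dM| ≤ |M/cM|^D. -/
/-- If `c^D·d` annihilates `M`, then `|dM| ≤ |M/cM|^D` as cardinals. -/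
theorem stmt16 (R : Type*) [CommRing R] (M : Type*) [AddCommGroup M]
    [Module R M] (c d : R) (D : ℕ) (hD : 1 ≤ D)
    (h : ∀ m : M, (c ^ D * d) • m = 0) :
    Cardinal.mk ↥(LinearMap.range (LinearMap.lsmul R M d)) ≤
      Cardinal.mk (M ⧸ LinearMap.range (LinearMap.lsmul R M c)) ^ D := by
  classical
  set N := LinearMap.range (LinearMap.lsmul R M c) with hN
  set Q := M ⧸ N
  let π : M →ₗ[R] Q := N.mkQ
  have hπ : Function.Surjective π := N.mkQ_surjective
  let s : Q → M := Function.surjInv hπ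
  have hs : ∀ q, π (s q) = q := Function.surjInv_eq hπ
  have key : ∀ m : M, ∃ u : M, m = s (π m) + c • u := by
    intro m
    have h0 : π (m - s (π m)) = 0 := by rw [map_sub, hs, sub_self]
    have hmem : m - s (π m) ∈ N := (Submodule.Quotient.mk_eq_zero N).mp h0
    obtain ⟨u, hu⟩ := hmem
    refine ⟨u, ?_⟩
    have : c • u = m - s (π m) := by simpa using hu
    rw [this]; abel
  let step : M → M := fun m => (key m).choose
  have hstep : ∀ m : M, m = s (π m) + c • step m := fun m => (key m).choose_spec
  -- witness sequence for each element of dM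
  let w : ↥(LinearMap.range (LinearMap.lsmul R M d)) → ℕ → M := fun x =>
    fun n => Nat.rec (x.2.choose) (fun _ prev => step prev) n
  have hw0 : ∀ x, d • w x 0 = (x : M) := fun x => by
    show d • x.2.choose = (x : M)
    simpa using x.2.choose_spec
  have hwsucc : ∀ x n, w x (n + 1) = step (w x n) := fun x n => rfl
  have telescope : ∀ (x : ↥(LinearMap.range (LinearMap.lsmul R M d))) (n : ℕ), (x : M) =
      (∑ i ∈ Finset.range n, (c ^ i * d) • s (π (w x i))) + (c ^ n * d) • w x n := by
    intro x n
    induction n with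
    | zero => simp [hw0 x]
    | succ n ih =>
      rw [Finset.sum_range_succ]
      have : (c ^ n * d) • w x n
          = (c ^ n * d) • s (π (w x n)) + (c ^ (n + 1) * d) • w x (n + 1) := by
        rw [hwsucc x n]
        conv_lhs => rw [hstep (w x n)]
        rw [smul_add, smul_smul]
        congr 2
        ring
      rw [ih, this]; abel
  have reconstruct : ∀ (x : ↥(LinearMap.range (LinearMap.lsmul R M d))), (x : M) = ∑ i ∈ Finset.range D, (c ^ i * d) • s (π (w x i)) := by
    intro x
    have := telescope x D
    rwa [h (w x D), add_zero] at this
  let F : ↥(LinearMap.range (LinearMap.lsmul R M d)) → (Fin D → Q) :=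
    fun x i => π (w x i)
  have hF : Function.Injective F := by
    intro x y hxy
    have hcl : ∀ i ∈ Finset.range D, (c ^ i * d) • s (π (w x i)) = (c ^ i * d) • s (π (w y i)) := by
      intro i hi
      have : F x ⟨i, Finset.mem_range.mp hi⟩ = F y ⟨i, Finset.mem_range.mp hi⟩ := by rw [hxy]
      simpa [F] using congrArg (fun q => (c ^ i * d) • s q) this
    have : (x : M) = (y : M) := by
      rw [reconstruct x, reconstruct y]
      exact Finset.sum_congr rfl hcl
    exact Subtype.ext this
  calc Cardinal.mk ↥(LinearMap.range (LinearMap.lsmul R M d))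
      ≤ Cardinal.mk (Fin D → Q) := Cardinal.mk_le_of_injective hF
    _ = Cardinal.mk Q ^ D := by
        simp [Cardinal.power_def]
end

section
/- Let V be a valuation domain, e ∈ V nonzero, and J a proper ideal of V such that (J : e) ⊆ eV + J. Then there exists an ideal I of V with J = e²I, where e²I denotes the product of the principal ideal (e²) with I. -/
/-- If `e ≠ 0` and `J` is a proper ideal of a valuation domain `V` with
`(J : e) ⊆ eV + J`, then `J = e²I` for some ideal `I`. -/
theorem stmt18 (V : Type*) [CommRing V] [IsDomain V] [ValuationRing V]
    (e : V) (he : e ≠ 0) (J : Ideal V) (hJ : J ≠ ⊤)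
    (h : ∀ r : V, r * e ∈ J → r ∈ Ideal.span {e} ⊔ J) :
    ∃ I : Ideal V, J = Ideal.span {e ^ 2} * I := by
  -- Step 1: e ∉ J
  have heJ : e ∉ J := by
    intro heJ
    rcases Ideal.mem_span_singleton_sup.mp (h 1 (by simpa using heJ)) with ⟨a, b, hb, hab⟩
    exact hJ (Ideal.eq_top_of_isUnit_mem J
      (show (1 : V) ∈ J from hab ▸ J.add_mem (J.mul_mem_left a heJ) hb) isUnit_one)
  -- Step 2: J ⊆ eV
  have hJe : ∀ x ∈ J, e ∣ x := by
    intro x hx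
    obtain ⟨c, hc | hc⟩ := ValuationRing.cond e x
    · exact ⟨c, hc.symm⟩
    · exact absurd (hc ▸ J.mul_mem_right c hx) heJ
  -- Step 3: J ⊆ e²V
  have hJe2 : ∀ x ∈ J, e ^ 2 ∣ x := by
    intro x hx
    obtain ⟨r, hr⟩ := hJe x hx
    have hrE : r * e ∈ J := by rwa [mul_comm, ← hr]
    rcases Ideal.mem_span_singleton_sup.mp (h r hrE) with ⟨a, b, hb, hab⟩
    obtain ⟨u, hu⟩ := hJe b hb
    exact ⟨a + u, by rw [hr, ← hab, hu]; ring⟩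
  refine ⟨J.colon (Ideal.span {e ^ 2}), le_antisymm ?_ ?_⟩
  · intro x hx
    obtain ⟨r, hr⟩ := hJe2 x hx
    have hrc : r ∈ J.colon (Ideal.span {e ^ 2}) :=
      Ideal.mem_colon_span_singleton.mpr (by rw [mul_comm, ← hr]; exact hx)
    exact hr ▸ Ideal.mul_mem_mul (Ideal.mem_span_singleton_self _) hrc
  · rw [Ideal.mul_le]
    intro a ha b hb
    obtain ⟨c, hc⟩ := Ideal.mem_span_singleton.mp ha
    have hb2 : b * e ^ 2 ∈ J := Ideal.mem_colon_span_singleton.mp hb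
    rw [hc]
    have : e ^ 2 * c * b = b * e ^ 2 * c := by ring
    rw [this]
    exact J.mul_mem_right c hb2
end

section
/- Let R be a commutative ring, M an R-module and a, b, c, r, α ∈ R such that c·α = a·r, αM = M, (r·b)·m = 0 for all m ∈ M, and every m ∈ M with r·m = 0 lies in aM. Then, as cardinals, |{m ∈ M : b·m = 0}/({m ∈ M : b·m = 0} ∩ cM)| = |{m ∈ M : b·m = 0}/({m ∈ M : b·m = 0} ∩ rM)| · |M/aM|. -/
lemma aux_mk_eq_mk_quot_mul_mk {R G : Type*} [Ring R] [AddCommGroup G] [Module R G]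
    (S : Submodule R G) :
    Cardinal.mk G = Cardinal.mk (G ⧸ S) * Cardinal.mk S := by
  have h : Cardinal.mk G = Cardinal.mk ((G ⧸ S) × S) :=
    Cardinal.mk_congr AddSubgroup.addGroupEquivQuotientProdAddSubgroup
  simpa using h

/-- If `c·α = a·r`, `αM = M`, `rb` annihilates `M`, and every `r`-torsion
element of `M` lies in `aM`, then
`|ker(b)/(ker(b) ∩ cM)| = |ker(b)/(ker(b) ∩ rM)| · |M/aM|` as cardinals. -/
theorem stmt19 (R : Type*) [CommRing R] (M : Type*) [AddCommGroup M]
    [Module R M] (a b c r α : R)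
    (hca : c * α = a * r)
    (hα : LinearMap.range (LinearMap.lsmul R M α) = ⊤)
    (hrb : ∀ m : M, (r * b) • m = 0)
    (hr : ∀ m : M, r • m = 0 → m ∈ LinearMap.range (LinearMap.lsmul R M a)) :
    Cardinal.mk
        (↥(LinearMap.ker (LinearMap.lsmul R M b)) ⧸
          Submodule.comap (LinearMap.ker (LinearMap.lsmul R M b)).subtype
            (LinearMap.range (LinearMap.lsmul R M c))) =
      Cardinal.mk
          (↥(LinearMap.ker (LinearMap.lsmul R M b)) ⧸
            Submodule.comap (LinearMap.ker (LinearMap.lsmul R M b)).subtype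
              (LinearMap.range (LinearMap.lsmul R M r))) *
        Cardinal.mk (M ⧸ LinearMap.range (LinearMap.lsmul R M a)) := by
  have hαs : ∀ x : M, ∃ y : M, α • y = x := by
    intro x
    have := LinearMap.range_eq_top.mp hα x
    simpa using this
  set K := LinearMap.ker (LinearMap.lsmul R M b) with hKdef
  have hrK : ∀ m : M, r • m ∈ K := by
    intro m
    simp only [hKdef, LinearMap.mem_ker, LinearMap.lsmul_apply, smul_smul]
    rw [mul_comm]
    exact hrb m
  set C : Submodule R K :=
    Submodule.comap K.subtype (LinearMap.range (LinearMap.lsmul R M c)) with hCdef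
  set Rr : Submodule R K :=
    Submodule.comap K.subtype (LinearMap.range (LinearMap.lsmul R M r)) with hRrdef
  have hCR : C ≤ Rr := by
    rintro k hk
    obtain ⟨m, hm⟩ := hk
    obtain ⟨m', hm'⟩ := hαs m
    refine ⟨a • m', ?_⟩
    simp only [LinearMap.lsmul_apply] at hm ⊢
    rw [smul_smul, mul_comm r a, ← hca, ← smul_smul, hm', hm]
  let f : M →ₗ[R] K := (LinearMap.lsmul R M r).codRestrict K hrK
  let φ : M →ₗ[R] K ⧸ C := C.mkQ.comp f
  have hker : LinearMap.ker φ = LinearMap.range (LinearMap.lsmul R M a) := by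
    ext m
    constructor
    · intro hm
      have hm' : f m ∈ C := by
        simpa [φ, Submodule.Quotient.mk_eq_zero] using hm
      obtain ⟨x, hx⟩ := hm'
      simp only [LinearMap.lsmul_apply] at hx
      have hx' : c • x = r • m := hx
      obtain ⟨x', rfl⟩ := hαs x
      have : r • (m - a • x') = 0 := by
        rw [smul_sub, smul_smul, mul_comm r a, ← hca, ← smul_smul, ← hx']
        simp
      obtain ⟨n, hn⟩ := hr _ this
      simp only [LinearMap.lsmul_apply] at hn
      exact ⟨n + x', by simp only [LinearMap.lsmul_apply, smul_add, hn]; abel⟩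
    · rintro ⟨n, rfl⟩
      simp only [LinearMap.lsmul_apply]
      have : f (a • n) ∈ C := by
        refine ⟨α • n, ?_⟩
        simp only [LinearMap.lsmul_apply]
        show c • α • n = r • (a • n)
        rw [smul_smul, hca, smul_smul, mul_comm r a]
      simp only [LinearMap.mem_ker, φ, LinearMap.comp_apply, Submodule.mkQ_apply,
        Submodule.Quotient.mk_eq_zero]
      exact this
  have hrange : LinearMap.range φ = Rr.map C.mkQ := by
    rw [show φ = C.mkQ.comp f from rfl, LinearMap.range_comp]
    congr 1
    ext k
    constructor
    · rintro ⟨m, rfl⟩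
      exact ⟨m, rfl⟩
    · rintro ⟨m, hm⟩
      exact ⟨m, Subtype.ext hm⟩
  have e1 : (M ⧸ LinearMap.range (LinearMap.lsmul R M a)) ≃ₗ[R] ↥(Rr.map C.mkQ) :=
    ((Submodule.quotEquivOfEq _ _ hker.symm).trans φ.quotKerEquivRange).trans
      (LinearEquiv.ofEq _ _ hrange)
  have e2 : ((K ⧸ C) ⧸ Rr.map C.mkQ) ≃ₗ[R] K ⧸ Rr :=
    Submodule.quotientQuotientEquivQuotient C Rr hCR
  calc Cardinal.mk (K ⧸ C)
      = Cardinal.mk ((K ⧸ C) ⧸ Rr.map C.mkQ) * Cardinal.mk (Rr.map C.mkQ) :=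
        aux_mk_eq_mk_quot_mul_mk _
    _ = Cardinal.mk (K ⧸ Rr) * Cardinal.mk (M ⧸ LinearMap.range (LinearMap.lsmul R M a)) := by
        rw [Cardinal.mk_congr e2.toEquiv, Cardinal.mk_congr e1.toEquiv]
end
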